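/- Let d ≥ 0, let C be a compact Hausdorff abelian topological group, and let A be a torsion-free subgroup of ℝ^d × C that is discrete in the subspace topology and cocompact (the quotient (ℝ^d × C)/A is compact). Then A is a free abelian group of rank d, i.e. A ≅ ℤ^d. -/

import Mathlib

open Set

section Aux

variable {d : ℕ} {C : Type*} [AddCommGroup C] [TopologicalSpace C] [IsTopologicalAddGroup C]
  [CompactSpace C] [T2Space C]

/-- helper: discrete subgroups intersect compacts in finite sets -/
theorem aux_finite_inter (A : AddSubgroup ((Fin d → ℝ) × C)) [DiscreteTopology A]
    {K : Set ((Fin d → ℝ) × C)} (hK : IsCompact K) :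
    ((A : Set ((Fin d → ℝ) × C)) ∩ K).Finite := by
  have hAcl : IsClosed (A : Set ((Fin d → ℝ) × C)) := AddSubgroup.isClosed_of_discrete
  have hcomp : IsCompact ((A : Set ((Fin d → ℝ) × C)) ∩ K) := hK.inter_left hAcl
  have hdisc : DiscreteTopology ((A : Set ((Fin d → ℝ) × C)) ∩ K : Set _) :=
    DiscreteTopology.of_subset ‹DiscreteTopology A› inter_subset_left
  exact hcomp.finite ⟨hdisc⟩

end Aux

/-- **A torsion-free uniform lattice in `ℝ^d × C` is free abelian of rank `d`.**
Let `d ≥ 0`, let `C` be a compact Hausdorff abelian topological group, and let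
`A` be a torsion-free discrete cocompact subgroup of `ℝ^d × C`.  Then
`A ≅ ℤ^d`. -/
theorem uniform_lattice_in_real_times_compact_iso_zpow
    (d : ℕ)
    (C : Type*) [AddCommGroup C] [TopologicalSpace C] [IsTopologicalAddGroup C]
    [CompactSpace C] [T2Space C]
    (A : AddSubgroup ((Fin d → ℝ) × C))
    (hdisc : DiscreteTopology A)
    (hcocompact : CompactSpace (((Fin d → ℝ) × C) ⧸ A))
    (htf : ∀ g : A, g ≠ 0 → ¬IsOfFinAddOrder g) :
    Nonempty (A ≃+ (Fin d → ℤ)) := by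
  classical
  set E := (Fin d → ℝ)
  set G := E × C
  let π : G →+ E := AddMonoidHom.fst E C
  -- torsion-free gives no zero smul divisors over ℤ
  haveI : NoZeroSMulDivisors ℤ A := ⟨fun {n a} h => by
    by_contra hc
    push_neg at hc
    exact htf a hc.2 (isOfFinAddOrder_iff_zsmul_eq_zero.mpr ⟨n, hc.1, h⟩)⟩
  -- Step 1: elements of A with zero first coordinate are zero
  have hker : ∀ a : A, (a : G).1 = 0 → a = 0 := by
    intro a ha
    by_contra hne
    have hinj : Function.Injective fun n : ℤ => n • (a : G) := by
      intro n m hnm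
      have : n • a = m • a := by
        apply Subtype.ext
        simpa using hnm
      have := smul_left_injective ℤ (M := A) hne (by exact this)
      exact this
    have hmem : ∀ n : ℤ, n • (a : G) ∈ (A : Set G) ∩ ({(0 : E)} ×ˢ (univ : Set C)) := by
      intro n
      refine ⟨A.zsmul_mem a.2 n, ?_, trivial⟩
      show (n • (a : G)).1 ∈ ({(0 : E)} : Set E)
      simp [ha]
    have hfin : ((A : Set G) ∩ ({(0 : E)} ×ˢ (univ : Set C))).Finite :=
      aux_finite_inter A (isCompact_singleton.prod isCompact_univ)
    exact (Set.infinite_of_injective_forall_mem hinj hmem) hfin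
  -- Step 2: the projection of A to E
  set L : AddSubgroup E := A.map π with hL
  -- Step 3: L is discrete
  have hfin1 : ((L : Set E) ∩ Metric.closedBall 0 1).Finite := by
    have hfinT : ((A : Set G) ∩ (Metric.closedBall (0 : E) 1 ×ˢ (univ : Set C))).Finite :=
      aux_finite_inter A ((isCompact_closedBall _ _).prod isCompact_univ)
    have : (L : Set E) ∩ Metric.closedBall 0 1 ⊆
        Prod.fst '' ((A : Set G) ∩ (Metric.closedBall (0 : E) 1 ×ˢ (univ : Set C))) := by
      rintro x ⟨hxL, hxB⟩
      obtain ⟨g, hgA, rfl⟩ := AddSubgroup.mem_map.mp hxL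
      exact ⟨g, ⟨hgA, hxB, trivial⟩, rfl⟩
    exact (hfinT.image Prod.fst).subset this
  haveI hLdisc : DiscreteTopology L := by
    apply discreteTopology_of_isOpen_singleton_zero
    rw [isOpen_induced_iff]
    refine ⟨Metric.ball 0 1 \ (((L : Set E) ∩ Metric.closedBall 0 1) \ {0}), ?_, ?_⟩
    · exact Metric.isOpen_ball.sdiff ((hfin1.subset diff_subset).isClosed)
    · ext x
      simp only [mem_preimage, mem_diff, Metric.mem_ball, mem_singleton_iff]
      constructor
      · rintro ⟨hx1, hx2⟩
        have hxcb : (x : E) ∈ Metric.closedBall 0 1 := Metric.ball_subset_closedBall hx1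
        have : (x : E) ∈ ({0} : Set E) := by
          by_contra h
          exact hx2 ⟨⟨x.2, hxcb⟩, h⟩
        exact Subtype.ext this
      · rintro rfl
        refine ⟨by simpa using one_pos, ?_⟩
        rintro ⟨-, h0⟩
        exact h0 rfl
  -- Step 4: E ⧸ L is compact
  haveI hLcc : CompactSpace (E ⧸ L) := by
    let f : G →+ E ⧸ L := (QuotientAddGroup.mk' L).comp π
    have hf0 : ∀ g ∈ A, f g = 0 := by
      intro g hg
      simp only [f, AddMonoidHom.comp_apply, QuotientAddGroup.mk'_apply,
        QuotientAddGroup.eq_zero_iff]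
      exact AddSubgroup.mem_map.mpr ⟨g, hg, rfl⟩
    let ψ : (G ⧸ A) →+ E ⧸ L := QuotientAddGroup.lift A f hf0
    have hcont : Continuous ψ := by
      rw [(QuotientAddGroup.isQuotientMap_mk A).continuous_iff]
      exact continuous_quot_mk.comp continuous_fst
    have hsurj : Function.Surjective ψ := by
      intro y
      obtain ⟨x, rfl⟩ := QuotientAddGroup.mk_surjective y
      exact ⟨QuotientAddGroup.mk ((x, 0) : G), rfl⟩
    constructor
    rw [← Set.range_eq_univ.mpr hsurj, ← Set.image_univ]
    exact isCompact_univ.image hcont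
  -- Step 5: L spans E over ℝ
  have hspan : Submodule.span ℝ (L : Set E) = ⊤ := by
    by_contra hne
    obtain ⟨v, hv⟩ : ∃ v : E, v ∉ Submodule.span ℝ (L : Set E) := by
      by_contra h
      push_neg at h
      exact hne (Submodule.eq_top_iff'.mpr h)
    set V := Submodule.span ℝ (L : Set E) with hV
    haveI hVcl : IsClosed (V : Set E) := Submodule.closed_of_finiteDimensional V
    -- continuous surjection E ⧸ L → E ⧸ V
    let g : E →+ E ⧸ V := V.mkQ.toAddMonoidHom
    have hg0 : ∀ x ∈ L, g x = 0 := by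
      intro x hx
      simpa [g, Submodule.Quotient.mk_eq_zero] using Submodule.subset_span hx
    let χ : (E ⧸ L) →+ E ⧸ V := QuotientAddGroup.lift L g hg0
    have hgc : Continuous g := by
      refine AddMonoidHomClass.continuous_of_bound g 1 fun x => ?_
      simpa [g] using Submodule.Quotient.norm_mk_le V x
    have hcont : Continuous χ := by
      rw [(QuotientAddGroup.isQuotientMap_mk L).continuous_iff]
      exact hgc
    have hsurj : Function.Surjective χ := by
      intro y
      obtain ⟨x, rfl⟩ := Submodule.Quotient.mk_surjective V y
      exact ⟨QuotientAddGroup.mk x, rfl⟩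
    haveI : CompactSpace (E ⧸ V) := by
      constructor
      rw [← Set.range_eq_univ.mpr hsurj, ← Set.image_univ]
      exact isCompact_univ.image hcont
    haveI : Nontrivial (E ⧸ V) := by
      refine ⟨V.mkQ v, 0, ?_⟩
      simpa [Submodule.Quotient.mk_eq_zero] using hv
    exact (NoncompactSpace.noncompact_univ (X := E ⧸ V)) isCompact_univ
  -- Step 6: L is a ℤ-lattice, hence free of rank d
  set Lsub : Submodule ℤ E := AddSubgroup.toIntSubmodule L with hLsub
  haveI : DiscreteTopology Lsub := hLdisc
  haveI : IsZLattice ℝ Lsub := ⟨hspan⟩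
  haveI := ZLattice.module_finite ℝ Lsub
  haveI := ZLattice.module_free ℝ Lsub
  have hrank : Module.finrank ℤ Lsub = d := by
    rw [ZLattice.rank ℝ Lsub, Module.finrank_fin_fun]
  let b := Module.Free.chooseBasis ℤ Lsub
  have hcard : Fintype.card (Module.Free.ChooseBasisIndex ℤ Lsub) = d := by
    rw [← Module.finrank_eq_card_chooseBasisIndex, hrank]
  let b' : Module.Basis (Fin d) ℤ Lsub := b.reindex (Fintype.equivFinOfCardEq hcard)
  -- Step 7: A ≃+ L
  let φ : A →+ L := (π.comp A.subtype).codRestrict L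
    (fun a => AddSubgroup.mem_map.mpr ⟨a, a.2, rfl⟩)
  have hφbij : Function.Bijective φ := by
    constructor
    · intro a b hab
      have h1 : ((a : G).1 : E) = (b : G).1 := congrArg Subtype.val hab
      have : ((a - b : A) : G).1 = 0 := by
        push_cast
        simp [h1]
      have := hker _ this
      exact sub_eq_zero.mp this
    · rintro ⟨y, hy⟩
      obtain ⟨g, hgA, rfl⟩ := AddSubgroup.mem_map.mp hy
      exact ⟨⟨g, hgA⟩, rfl⟩
  exact ⟨(AddEquiv.ofBijective φ hφbij).trans b'.equivFun.toAddEquiv⟩
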